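/- Let R be a ring and I a two-sided ideal of R all of whose elements are nilpotent (a nil ideal). Then R is a GWNC ring if and only if the quotient ring R/I is a GWNC ring. -/
import Mathlib


def IsWeaklyNilCleanElem {R : Type*} [Ring R] (a : R) : Prop :=
  ∃ e q : R, IsIdempotentElem e ∧ IsNilpotent q ∧ (a = q + e ∨ a = q - e)

def IsGWNCRing (R : Type*) [Ring R] : Prop :=
  ∀ a : R, ¬IsUnit a → IsWeaklyNilCleanElem a

section Aux

variable {R : Type*} [Ring R] (I : TwoSidedIdeal R)

lemma gwnc_mk'_eq_zero_iff (x : R) : I.ringCon.mk' x = 0 ↔ x ∈ I := by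
  show (x : I.ringCon.Quotient) = (0 : R) ↔ _
  rw [RingCon.eq, ← TwoSidedIdeal.mem_iff]

lemma gwnc_nilpotent_of_mk' (hI : ∀ x ∈ I, IsNilpotent x) {q : R}
    (h : IsNilpotent (I.ringCon.mk' q)) : IsNilpotent q := by
  obtain ⟨n, hn⟩ := h
  rw [← map_pow, gwnc_mk'_eq_zero_iff] at hn
  obtain ⟨m, hm⟩ := hI _ hn
  exact ⟨n * m, by rw [pow_mul, hm]⟩

lemma gwnc_isUnit_of_mk' (hI : ∀ x ∈ I, IsNilpotent x) {a : R}
    (h : IsUnit (I.ringCon.mk' a)) : IsUnit a := by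
  obtain ⟨u, hu⟩ := h
  have hsurj : Function.Surjective (I.ringCon.mk') := Quotient.mk''_surjective
  obtain ⟨b, hb⟩ := hsurj (↑u⁻¹)
  have hab : IsUnit (a * b) := by
    have : I.ringCon.mk' (a * b) - 1 = 0 := by
      rw [map_mul, ← hu, hb, u.mul_inv, sub_self]
    rw [← map_one (I.ringCon.mk'), ← map_sub, gwnc_mk'_eq_zero_iff] at this
    have := hI _ this
    simpa using this.isUnit_add_right_of_commute isUnit_one (Commute.one_right _)
  have hba : IsUnit (b * a) := by
    have : I.ringCon.mk' (b * a) - 1 = 0 := by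
      rw [map_mul, ← hu, hb, u.inv_mul, sub_self]
    rw [← map_one (I.ringCon.mk'), ← map_sub, gwnc_mk'_eq_zero_iff] at this
    have := hI _ this
    simpa using this.isUnit_add_right_of_commute isUnit_one (Commute.one_right _)
  obtain ⟨v, hv⟩ := hab
  obtain ⟨w, hw⟩ := hba
  have h1 : a * (b * ↑v⁻¹) = 1 := by rw [← mul_assoc, ← hv, v.mul_inv]
  have h2 : (↑w⁻¹ * b) * a = 1 := by rw [mul_assoc, ← hw, w.inv_mul]
  have key : (↑w⁻¹ * b : R) = b * ↑v⁻¹ := by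
    calc (↑w⁻¹ * b : R) = (↑w⁻¹ * b) * (a * (b * ↑v⁻¹)) := by rw [h1, mul_one]
      _ = ((↑w⁻¹ * b) * a) * (b * ↑v⁻¹) := by simp [mul_assoc]
      _ = b * ↑v⁻¹ := by rw [h2, one_mul]
  exact ⟨⟨a, b * ↑v⁻¹, h1, by rw [← key, h2]⟩, rfl⟩

end Aux

/-- `R` is GWNC iff the quotient of `R` by a nil two-sided ideal `I` is GWNC. -/
theorem isGWNC_iff_quotient_nil_ideal {R : Type*} [Ring R] (I : TwoSidedIdeal R)
    (hI : ∀ x ∈ I, IsNilpotent x) :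
    IsGWNCRing R ↔ IsGWNCRing I.ringCon.Quotient := by
  set f := I.ringCon.mk' with hf
  have hsurj : Function.Surjective f := Quotient.mk''_surjective
  constructor
  · intro hR x hx
    obtain ⟨a, rfl⟩ := hsurj x
    have ha : ¬IsUnit a := fun h => hx (h.map f)
    obtain ⟨e, q, he, hq, hor⟩ := hR a ha
    exact ⟨f e, f q, by simpa [IsIdempotentElem, ← map_mul] using congrArg f he.eq,
      hq.map f, by rcases hor with h | h <;> simp [h]⟩
  · intro hQ a ha
    have ha' : ¬IsUnit (f a) := fun h => ha (gwnc_isUnit_of_mk' I hI h)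
    obtain ⟨e1, q1, he1, hq1, hor⟩ := hQ (f a) ha'
    have hker : ∀ x ∈ RingHom.ker f, IsNilpotent x := fun x hx =>
      hI x ((gwnc_mk'_eq_zero_iff I x).mp hx)
    obtain ⟨e, he, hfe⟩ := exists_isIdempotentElem_eq_of_ker_isNilpotent f hker e1
      (hsurj e1) he1
    rcases hor with h | h
    · refine ⟨e, a - e, he, ?_, Or.inl (by abel)⟩
      refine gwnc_nilpotent_of_mk' I hI ?_
      rw [map_sub, hfe, h]
      simpa using hq1
    · refine ⟨e, a + e, he, ?_, Or.inr (by abel)⟩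
      refine gwnc_nilpotent_of_mk' I hI ?_
      rw [map_add, hfe, h]
      simpa using hq1
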